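/- Let 1 ≤ r ≤ k ≤ n and let M(r) = {σ ∈ S_n : |support(σ) ∩ [k]| = r}. Then the arrangement graph A(n,k,r) is regular of degree |M(r)|/(n−k)!; that is, for every vertex v of A(n,k,r), (n−k)! times the degree of v equals |M(r)|. -/

import Mathlib

open Finset Equiv

/-- Any embedding `Fin k ↪ Fin n` extends to a permutation of `Fin n`
(relative to the canonical embedding). -/
private lemma exists_extension {n k : ℕ} (hkn : k ≤ n) (e : Fin k ↪ Fin n) :
    ∃ τ : Equiv.Perm (Fin n), ∀ i, τ (Fin.castLE hkn i) = e i := by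
  classical
  let f : Fin k ↪ Fin n := Fin.castLEEmb hkn
  let h1 := f.toEquivRange
  let h2 := e.toEquivRange
  refine ⟨Equiv.extendSubtype (h1.symm.trans h2), fun i => ?_⟩
  have hm : (Fin.castLE hkn i) ∈ Set.range f := ⟨i, rfl⟩
  rw [Equiv.extendSubtype_apply_of_mem _ _ hm]
  have : (⟨Fin.castLE hkn i, hm⟩ : Set.range f) = h1 i := by
    rw [Function.Embedding.toEquivRange_apply]
    exact Subtype.ext (by simp [f])
  rw [Equiv.trans_apply, this, Equiv.symm_apply_apply]
  simp [h2, Function.Embedding.toEquivRange_apply]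

private def restEquiv {n k : ℕ} (hkn : k ≤ n) :
    {x : Fin n // ¬ ((x : ℕ) < k)} ≃ Fin (n - k) where
  toFun x := ⟨(x.1 : ℕ) - k, by have := x.1.2; have := x.2; omega⟩
  invFun y := ⟨⟨(y : ℕ) + k, by have := y.2; omega⟩, by simp⟩
  left_inv x := by
    ext
    have := x.2
    simp only []
    omega
  right_inv y := by
    ext
    simp

private lemma fiber_card {n k : ℕ} (hkn : k ≤ n) (q : Fin k ↪ Fin n) :
    (Finset.univ.filter fun σ : Equiv.Perm (Fin n) =>
      ∀ i, σ (Fin.castLE hkn i) = q i).card = (n - k).factorial := by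
  classical
  obtain ⟨τ, hτ⟩ := exists_extension hkn q
  -- translate the fiber to the stabilizer
  have hbij : (Finset.univ.filter fun σ : Equiv.Perm (Fin n) =>
      ∀ i, σ (Fin.castLE hkn i) = q i).card =
      (Finset.univ.filter fun σ : Equiv.Perm (Fin n) =>
      ∀ i, σ (Fin.castLE hkn i) = Fin.castLE hkn i).card := by
    apply Finset.card_nbij' (fun σ => τ⁻¹ * σ) (fun σ => τ * σ)
    · intro σ hσ
      simp only [Finset.mem_coe, Finset.mem_filter, Finset.mem_univ, true_and] at hσ ⊢
      intro i
      rw [Equiv.Perm.mul_apply, hσ i, ← hτ i]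
      exact τ.symm_apply_apply _
    · intro σ hσ
      simp only [Finset.mem_coe, Finset.mem_filter, Finset.mem_univ, true_and] at hσ ⊢
      intro i
      rw [Equiv.Perm.mul_apply, hσ i, hτ i]
    · intro σ _; group
    · intro σ _; group
  rw [hbij]
  have hcard : (Finset.univ.filter fun σ : Equiv.Perm (Fin n) =>
      ∀ i, σ (Fin.castLE hkn i) = Fin.castLE hkn i).card =
      Fintype.card {σ : Equiv.Perm (Fin n) // ∀ a : Fin n, (a : ℕ) < k → σ a = a} := by
    rw [Fintype.card_subtype]
    congr 1
    apply Finset.filter_congr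
    intro σ _
    constructor
    · intro h a ha
      have : a = Fin.castLE hkn ⟨(a : ℕ), ha⟩ := by ext; simp
      rw [this, h]
    · intro h i
      exact h _ (by simpa using i.2)
  rw [hcard]
  have e1 : {σ : Equiv.Perm (Fin n) // ∀ a : Fin n, (a : ℕ) < k → σ a = a} ≃
      Equiv.Perm {x : Fin n // ¬ ((x : ℕ) < k)} := by
    have h := (Equiv.Perm.subtypeEquivSubtypePerm (fun x : Fin n => ¬ ((x : ℕ) < k))).symm
    refine Equiv.trans (Equiv.subtypeEquivRight ?_) h
    intro σ
    constructor
    · intro h a ha; exact h a (of_not_not ha)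
    · intro h a ha; exact h a (not_not_intro ha)
  rw [Fintype.card_congr e1, Fintype.card_congr (Equiv.permCongr (restEquiv hkn)),
    Fintype.card_perm, Fintype.card_fin]

private lemma supp_card {n k r : ℕ} (hkn : k ≤ n) (σ : Equiv.Perm (Fin n)) :
    (σ.support.filter fun i : Fin n => (i : ℕ) < k).card =
      (Finset.univ.filter fun i : Fin k =>
        Fin.castLE hkn i ≠ σ (Fin.castLE hkn i)).card := by
  apply Finset.card_bij (fun (i : Fin n) hi => (⟨(i : ℕ), by
    simp only [Finset.mem_filter] at hi; exact hi.2⟩ : Fin k))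
  · intro a ha
    simp only [Finset.mem_filter, Equiv.Perm.mem_support] at ha
    simp only [Finset.mem_filter, Finset.mem_univ, true_and]
    have : Fin.castLE hkn ⟨(a : ℕ), ha.2⟩ = a := by ext; simp
    rw [this]
    exact fun h => ha.1 h.symm
  · intro a ha b hb hab
    have : (a : ℕ) = (b : ℕ) := by simpa using congrArg Fin.val hab
    exact Fin.ext this
  · intro b hb
    simp only [Finset.mem_filter, Finset.mem_univ, true_and] at hb
    refine ⟨Fin.castLE hkn b, ?_, ?_⟩
    · simp only [Finset.mem_filter, Equiv.Perm.mem_support]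
      exact ⟨fun h => hb h.symm, by simp⟩
    · ext; simp

theorem stmt_17 {n k r : ℕ} (hr : 1 ≤ r) (hrk : r ≤ k) (hkn : k ≤ n)
    (A : SimpleGraph (Fin k ↪ Fin n)) [DecidableRel A.Adj]
    (hA : ∀ p q : Fin k ↪ Fin n, A.Adj p q ↔
      (Finset.univ.filter fun i : Fin k => p i ≠ q i).card = r) :
    ∀ v : Fin k ↪ Fin n, (n - k).factorial * A.degree v =
      (Finset.univ.filter fun σ : Equiv.Perm (Fin n) =>
        (σ.support.filter fun i : Fin n => (i : ℕ) < k).card = r).card := by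
  classical
  intro v
  set v₀ : Fin k ↪ Fin n := Fin.castLEEmb hkn with hv₀
  obtain ⟨τ, hτ⟩ := exists_extension hkn v
  -- vertex-transitivity: degrees agree
  have hdeg : A.degree v = A.degree v₀ := by
    unfold SimpleGraph.degree
    apply Finset.card_nbij' (fun q => q.trans τ.symm.toEmbedding)
      (fun q => q.trans τ.toEmbedding)
    · intro q hq
      rw [Finset.mem_coe, SimpleGraph.mem_neighborFinset] at hq ⊢
      rw [hA] at hq ⊢
      rw [← hq]
      congr 1
      apply Finset.filter_congr
      intro i _
      simp only [Function.Embedding.trans_apply, Equiv.coe_toEmbedding, ne_eq,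
        Equiv.eq_symm_apply]
      have h2 : τ (v₀ i) = v i := hτ i
      rw [h2]
    · intro q hq
      rw [Finset.mem_coe, SimpleGraph.mem_neighborFinset] at hq ⊢
      rw [hA] at hq ⊢
      rw [← hq]
      congr 1
      apply Finset.filter_congr
      intro i _
      simp only [Function.Embedding.trans_apply, Equiv.coe_toEmbedding, ne_eq]
      have h2 : τ (v₀ i) = v i := hτ i
      rw [← h2]
      exact not_congr τ.apply_eq_iff_eq
    · intro q _; ext i; simp
    · intro q _; ext i; simp
  rw [hdeg]
  -- fiberwise counting
  set F : Equiv.Perm (Fin n) → (Fin k ↪ Fin n) :=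
    fun σ => (Fin.castLEEmb hkn).trans σ.toEmbedding with hF
  have hmaps : ∀ σ ∈ (Finset.univ.filter fun σ : Equiv.Perm (Fin n) =>
      (σ.support.filter fun i : Fin n => (i : ℕ) < k).card = r),
      F σ ∈ A.neighborFinset v₀ := by
    intro σ hσ
    simp only [Finset.mem_filter, Finset.mem_univ, true_and] at hσ
    rw [SimpleGraph.mem_neighborFinset, hA]
    rw [supp_card (r := r) hkn σ] at hσ
    rw [← hσ]
    congr 1
  rw [Finset.card_eq_sum_card_fiberwise hmaps]
  have hfib : ∀ q ∈ A.neighborFinset v₀,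
      ((Finset.univ.filter fun σ : Equiv.Perm (Fin n) =>
        (σ.support.filter fun i : Fin n => (i : ℕ) < k).card = r).filter
        fun σ => F σ = q).card = (n - k).factorial := by
    intro q hq
    rw [SimpleGraph.mem_neighborFinset, hA] at hq
    rw [← fiber_card hkn q]
    congr 1
    ext σ
    simp only [Finset.mem_filter, Finset.mem_univ, true_and]
    constructor
    · intro ⟨_, h2⟩ i
      rw [← h2]
      rfl
    · intro h
      have hFq : F σ = q := by
        ext i
        exact congrArg Fin.val (h i)
      refine ⟨?_, hFq⟩
      rw [supp_card (r := r) hkn σ, ← hq]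
      congr 1
      apply Finset.filter_congr
      intro i _
      rw [h i]
      have h2 : v₀ i = Fin.castLE hkn i := rfl
      rw [h2]
  rw [Finset.sum_congr rfl hfib, Finset.sum_const, smul_eq_mul]
  exact (mul_comm _ _)
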